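/- Let V be a module over the Lie algebra gl_n(F) (F = ℝ or ℂ) and λ ∈ V a nonzero vector such that E_{i,j}·λ = 0 whenever j > i+1, and E_{i,i+1}·λ = c_i·λ with c_i ≠ 0 for 1 ≤ i ≤ n-1. If the image of Lie(Ū_n) (strictly lower triangular matrices) in End(V) applied to λ lands in U(gl_{n-1}(F))·Z(U(gl_n(F)))·λ, then also U(Lie(Ū_n))·λ ⊆ U(gl_{n-1}(F))·Z(U(gl_n(F)))·λ, where the action of the universal enveloping algebra is the canonical extension of the Lie algebra action. -/

import Mathlib

open UniversalEnvelopingAlgebra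

attribute [local instance 100] LieRing.ofAssociativeRing

variable {F : Type*} [RCLike F] {n : ℕ}

/-- `gl_n(F)`. -/
abbrev gl (F : Type*) [RCLike F] (n : ℕ) := Matrix (Fin (n + 1)) (Fin (n + 1)) F

/-- The action of `U(gl_n(F))` on a `gl_n(F)`-module `V`, canonically extending
the Lie algebra action. -/
noncomputable def uAction (F : Type*) [RCLike F] (n : ℕ) (V : Type*)
    [AddCommGroup V] [Module F V] [LieRingModule (gl F n) V] [LieModule F (gl F n) V] :
    UniversalEnvelopingAlgebra F (gl F n) →ₐ[F] Module.End F V :=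
  (UniversalEnvelopingAlgebra.lift F) (LieModule.toEnd F (gl F n) V)

/-- The image of `U(gl_{n-1}(F))` inside `U(gl_n(F))`, where `gl_{n-1}(F)` is
embedded as the top-left `(n-1) × (n-1)` block. -/
noncomputable def ueaBlock (F : Type*) [RCLike F] (n : ℕ) :
    Subalgebra F (UniversalEnvelopingAlgebra F (gl F n)) :=
  Algebra.adjoin F ((ι F) ''
    {X : gl F n | ∀ i j, (i = Fin.last n ∨ j = Fin.last n) → X i j = 0})

/-- The image of `U(n̄)` inside `U(gl_n(F))`, where `n̄ = Lie(Ū_n)` is the Lie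
subalgebra of strictly lower triangular matrices. -/
noncomputable def ueaLower (F : Type*) [RCLike F] (n : ℕ) :
    Subalgebra F (UniversalEnvelopingAlgebra F (gl F n)) :=
  Algebra.adjoin F ((ι F) '' {X : gl F n | ∀ i j, i ≤ j → X i j = 0})

/-! ### Auxiliary matrix lemmas -/

/-- Strictly lower triangular. -/
def IsLowM (X : gl F n) : Prop := ∀ i j, i ≤ j → X i j = 0

/-- Supported in the top-left block. -/
def IsBlkM (X : gl F n) : Prop := ∀ i j, (i = Fin.last n ∨ j = Fin.last n) → X i j = 0

/-- Strictly lower triangular and supported in the bottom row. -/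
def IsBotM (X : gl F n) : Prop := IsLowM X ∧ ∀ i j, i ≠ Fin.last n → X i j = 0

lemma lie_entry (X Y : gl F n) (i j : Fin (n + 1)) :
    (⁅X, Y⁆ : gl F n) i j = (∑ k, X i k * Y k j) - ∑ k, Y i k * X k j := by
  rw [Ring.lie_def, Matrix.sub_apply, Matrix.mul_apply, Matrix.mul_apply]

lemma lie_col_last {X Y : gl F n} (hX : IsLowM X) (hY : IsBlkM Y) (i : Fin (n + 1)) :
    (⁅X, Y⁆ : gl F n) i (Fin.last n) = 0 := by
  rw [lie_entry, Finset.sum_eq_zero (fun k _ => by rw [hY k (Fin.last n) (Or.inr rfl), mul_zero]),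
    Finset.sum_eq_zero (fun k _ => by rw [hX k (Fin.last n) (Fin.le_last k), mul_zero]), sub_zero]

lemma bot_lie_blk {X Y : gl F n} (hX : IsBotM X) (hY : IsBlkM Y) :
    IsBotM (⁅X, Y⁆ : gl F n) := by
  have hrow : ∀ i j, i ≠ Fin.last n → (⁅X, Y⁆ : gl F n) i j = 0 := by
    intro i j hi
    rw [lie_entry, Finset.sum_eq_zero (fun k _ => by rw [hX.2 i k hi, zero_mul]),
      Finset.sum_eq_zero, sub_zero]
    intro k _
    by_cases hk : k = Fin.last n
    · subst hk; rw [hY i (Fin.last n) (Or.inr rfl), zero_mul]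
    · rw [hX.2 k j hk, mul_zero]
  refine ⟨?_, hrow⟩
  intro i j hij
  by_cases hi : i = Fin.last n
  · subst hi
    have hj : j = Fin.last n := Fin.last_le_iff.mp hij
    subst hj
    exact lie_col_last hX.1 hY _
  · exact hrow i j hi

lemma low_lie_blk {X Y : gl F n} (hX : IsLowM X) (hY : IsBlkM Y) :
    ∃ B N : gl F n, IsBlkM B ∧ IsBotM N ∧ (⁅X, Y⁆ : gl F n) = B + N := by
  set Z : gl F n := ⁅X, Y⁆ with hZ
  refine ⟨Matrix.of fun i j => if i = Fin.last n ∨ j = Fin.last n then 0 else Z i j,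
    Z - Matrix.of fun i j => if i = Fin.last n ∨ j = Fin.last n then 0 else Z i j,
    ?_, ⟨?_, ?_⟩, by abel⟩
  · intro i j h; simp [Matrix.of_apply, h]
  · intro i j hij
    rw [Matrix.sub_apply, Matrix.of_apply]
    by_cases hi : i = Fin.last n
    · subst hi
      have hj : j = Fin.last n := Fin.last_le_iff.mp hij
      subst hj
      rw [if_pos (Or.inl rfl), sub_zero, hZ]
      exact lie_col_last hX hY _
    · by_cases hj : j = Fin.last n
      · subst hj
        rw [if_pos (Or.inr rfl), sub_zero, hZ]
        exact lie_col_last hX hY _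
      · rw [if_neg (by tauto), sub_self]
  · intro i j hi
    rw [Matrix.sub_apply, Matrix.of_apply]
    by_cases hj : j = Fin.last n
    · subst hj
      rw [if_pos (Or.inr rfl), sub_zero, hZ]
      exact lie_col_last hX hY _
    · rw [if_neg (by tauto), sub_self]

/-- Let `V` be a `gl_n(F)`-module (`F = ℝ` or `ℂ`) and `λ ≠ 0` with
`E_{i,j}·λ = 0` for `j > i+1` and `E_{i,i+1}·λ = c_i·λ`, `c_i ≠ 0`.  If
`n̄·λ ⊆ U(gl_{n-1}(F))·Z(U(gl_n(F)))·λ`, then also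
`U(n̄)·λ ⊆ U(gl_{n-1}(F))·Z(U(gl_n(F)))·λ`. -/
theorem uea_lower_action_mem (V : Type*) [AddCommGroup V] [Module F V]
    [LieRingModule (gl F n) V] [LieModule F (gl F n) V]
    (lam : V) (hlam : lam ≠ 0)
    (hzero : ∀ i j : Fin (n + 1), (i : ℕ) + 1 < (j : ℕ) →
      ⁅(Matrix.single i j (1 : F) : gl F n), lam⁆ = 0)
    (heig : ∀ i : Fin n, ∃ c : F, c ≠ 0 ∧
      ⁅(Matrix.single i.castSucc i.succ (1 : F) : gl F n), lam⁆ = c • lam)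
    (W : Submodule F V)
    (hW : W = Submodule.span F
      {v : V | ∃ a ∈ ueaBlock F n, ∃ z ∈ Subalgebra.center F
          (UniversalEnvelopingAlgebra F (gl F n)),
        v = uAction F n V a (uAction F n V z lam)})
    (hlower : ∀ X : gl F n, (∀ i j, i ≤ j → X i j = 0) → ⁅X, lam⁆ ∈ W) :
    ∀ u ∈ ueaLower F n, uAction F n V u lam ∈ W := by
  classical
  set uA : UniversalEnvelopingAlgebra F (gl F n) →ₐ[F] Module.End F V := uAction F n V
    with huA
  set Zc := Subalgebra.center F (UniversalEnvelopingAlgebra F (gl F n)) with hZc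
  set blkS : Set (UniversalEnvelopingAlgebra F (gl F n)) :=
    (ι F) '' {X : gl F n | ∀ i j, (i = Fin.last n ∨ j = Fin.last n) → X i j = 0} with hblkS
  -- basic computation rules
  have uA_mul : ∀ (a b : UniversalEnvelopingAlgebra F (gl F n)) (v : V),
      uA (a * b) v = uA a (uA b v) := by
    intro a b v; rw [map_mul]; rfl
  have uA_ι : ∀ (X : gl F n) (v : V), uA ((ι F) X) v = ⁅X, v⁆ := by
    intro X v
    rw [huA, uAction, UniversalEnvelopingAlgebra.lift_ι_apply]
    rfl
  -- membership facts about W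
  have hmemW : ∀ a ∈ ueaBlock F n, ∀ z ∈ Zc, uA a (uA z lam) ∈ W := by
    intro a ha z hz
    rw [hW]
    exact Submodule.subset_span ⟨a, ha, z, hz, rfl⟩
  have hlamW : lam ∈ W := by simpa using hmemW 1 (one_mem _) 1 (one_mem _)
  have hzlam : ∀ z ∈ Zc, uA z lam ∈ W := fun z hz => by
    simpa using hmemW 1 (one_mem _) z hz
  have hgen : ∀ X : gl F n, IsBlkM X → (ι F) X ∈ ueaBlock F n := fun X hX =>
    Algebra.subset_adjoin ⟨X, hX, rfl⟩
  -- W is stable under ueaBlock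
  have hblk : ∀ a ∈ ueaBlock F n, ∀ w ∈ W, uA a w ∈ W := by
    intro a ha w hw
    rw [hW] at hw
    induction hw using Submodule.span_induction with
    | mem w hwmem =>
      obtain ⟨a', ha', z', hz', rfl⟩ := hwmem
      rw [← uA_mul]
      exact hmemW _ (mul_mem ha ha') _ hz'
    | zero => rw [map_zero]; exact W.zero_mem
    | add x y hx hy ihx ihy => rw [map_add]; exact W.add_mem ihx ihy
    | smul c x hx ih => rw [map_smul]; exact W.smul_mem c ih
  -- W is stable under the center
  have hcen : ∀ z ∈ Zc, ∀ w ∈ W, uA z w ∈ W := by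
    intro z hz w hw
    rw [hW] at hw
    induction hw using Submodule.span_induction with
    | mem w hwmem =>
      obtain ⟨a', ha', z', hz', rfl⟩ := hwmem
      rw [← uA_mul, ← uA_mul, ← Subalgebra.mem_center_iff.mp hz a', mul_assoc, uA_mul]
      exact hmemW a' ha' _ (mul_mem hz hz')
    | zero => rw [map_zero]; exact W.zero_mem
    | add x y hx hy ihx ihy => rw [map_add]; exact W.add_mem ihx ihy
    | smul c x hx ih => rw [map_smul]; exact W.smul_mem c ih
  have hprod : ∀ l : List (UniversalEnvelopingAlgebra F (gl F n)),
      (∀ y ∈ l, y ∈ blkS) → l.prod ∈ ueaBlock F n := fun l hl =>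
    Subalgebra.list_prod_mem _ fun y hy => Algebra.subset_adjoin (hl y hy)
  -- Stage 1 key lemma: bottom-row matrices against monomials
  have key1 : ∀ l : List (UniversalEnvelopingAlgebra F (gl F n)),
      (∀ y ∈ l, y ∈ blkS) → ∀ X : gl F n, IsBotM X → ∀ z ∈ Zc,
        uA ((ι F) X * l.prod) (uA z lam) ∈ W := by
    intro l
    induction l with
    | nil =>
      intro _ X hX z hz
      rw [List.prod_nil, mul_one, ← uA_mul, Subalgebra.mem_center_iff.mp hz ((ι F) X),
        uA_mul, uA_ι]
      exact hcen z hz _ (hlower X hX.1)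
    | cons y l ih =>
      intro hmem X hX z hz
      obtain ⟨Y, hY, rfl⟩ := hmem y (List.mem_cons_self)
      have hl : ∀ y' ∈ l, y' ∈ blkS := fun y' hy' => hmem y' (List.mem_cons_of_mem _ hy')
      have hlie : (ι F (L := gl F n)) ⁅X, Y⁆ = ι F X * ι F Y - ι F Y * ι F X := by
        rw [LieHom.map_lie]; exact Ring.lie_def _ _
      have hsplit : (ι F) X * ((ι F) Y * l.prod)
          = (ι F) Y * ((ι F) X * l.prod) + (ι F) ⁅X, Y⁆ * l.prod := by
        rw [hlie]; noncomm_ring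
      rw [List.prod_cons, hsplit, map_add, LinearMap.add_apply]
      refine W.add_mem ?_ ?_
      · rw [uA_mul]
        exact hblk _ (hgen Y hY) _ (ih hl X hX z hz)
      · exact ih hl ⁅X, Y⁆ (bot_lie_blk hX hY) z hz
  -- Stage 1: W is stable under bottom-row matrices
  have stage1 : ∀ X : gl F n, IsBotM X → ∀ w ∈ W, ⁅X, w⁆ ∈ W := by
    intro X hX w hw
    rw [hW] at hw
    induction hw using Submodule.span_induction with
    | mem w hwmem =>
      obtain ⟨a, ha, z, hz, rfl⟩ := hwmem
      rw [← uA_ι, ← uA_mul]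
      have ha' : a ∈ Submodule.span F ((Submonoid.closure blkS : Submonoid _) : Set _) := by
        rw [← Algebra.adjoin_eq_span]; exact ha
      clear ha
      induction ha' using Submodule.span_induction with
      | mem m hm =>
        obtain ⟨ll, hll, rfl⟩ := Submonoid.exists_list_of_mem_closure hm
        exact key1 ll hll X hX z hz
      | zero => rw [mul_zero, map_zero]; exact W.zero_mem
      | add x y hx hy ihx ihy =>
        rw [mul_add, map_add, LinearMap.add_apply]; exact W.add_mem ihx ihy
      | smul c x hx ihx =>
        rw [mul_smul_comm, map_smul, LinearMap.smul_apply]; exact W.smul_mem c ihx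
    | zero => rw [lie_zero]; exact W.zero_mem
    | add x y hx hy ihx ihy => rw [lie_add]; exact W.add_mem ihx ihy
    | smul c x hx ihx => rw [lie_smul]; exact W.smul_mem c ihx
  -- Stage 2 key lemma: general strictly lower matrices against monomials
  have key2 : ∀ X : gl F n, IsLowM X → ∀ l : List (UniversalEnvelopingAlgebra F (gl F n)),
      (∀ y ∈ l, y ∈ blkS) → ∀ z ∈ Zc, uA ((ι F) X * l.prod) (uA z lam) ∈ W := by
    intro X hX l
    induction l with
    | nil =>
      intro _ z hz
      rw [List.prod_nil, mul_one, ← uA_mul, Subalgebra.mem_center_iff.mp hz ((ι F) X),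
        uA_mul, uA_ι]
      exact hcen z hz _ (hlower X hX)
    | cons y l ih =>
      intro hmem z hz
      obtain ⟨Y, hY, rfl⟩ := hmem y (List.mem_cons_self)
      have hl : ∀ y' ∈ l, y' ∈ blkS := fun y' hy' => hmem y' (List.mem_cons_of_mem _ hy')
      obtain ⟨B, N, hB, hN, hBN⟩ := low_lie_blk hX hY
      have hlie : (ι F (L := gl F n)) ⁅X, Y⁆ = ι F X * ι F Y - ι F Y * ι F X := by
        rw [LieHom.map_lie]; exact Ring.lie_def _ _
      have hXY : ι F X * ι F Y = ι F Y * ι F X + (ι F) B + (ι F) N := by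
        rw [hBN, map_add] at hlie
        rw [add_assoc, hlie]
        abel
      have hsplit : (ι F) X * ((ι F) Y * l.prod)
          = (ι F) Y * ((ι F) X * l.prod) + (ι F) B * l.prod + (ι F) N * l.prod := by
        rw [← mul_assoc, hXY, add_mul, add_mul, mul_assoc]
      rw [List.prod_cons, hsplit, map_add, map_add, LinearMap.add_apply, LinearMap.add_apply]
      refine W.add_mem (W.add_mem ?_ ?_) ?_
      · rw [uA_mul]
        exact hblk _ (hgen Y hY) _ (ih hl z hz)
      · exact hblk _ (mul_mem (hgen B hB) (hprod l hl)) _ (hzlam z hz)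
      · rw [uA_mul, uA_ι]
        exact stage1 N hN _ (hblk _ (hprod l hl) _ (hzlam z hz))
  -- Stage 2: W is stable under strictly lower triangular matrices
  have stage2 : ∀ X : gl F n, IsLowM X → ∀ w ∈ W, ⁅X, w⁆ ∈ W := by
    intro X hX w hw
    rw [hW] at hw
    induction hw using Submodule.span_induction with
    | mem w hwmem =>
      obtain ⟨a, ha, z, hz, rfl⟩ := hwmem
      rw [← uA_ι, ← uA_mul]
      have ha' : a ∈ Submodule.span F ((Submonoid.closure blkS : Submonoid _) : Set _) := by
        rw [← Algebra.adjoin_eq_span]; exact ha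
      clear ha
      induction ha' using Submodule.span_induction with
      | mem m hm =>
        obtain ⟨ll, hll, rfl⟩ := Submonoid.exists_list_of_mem_closure hm
        exact key2 X hX ll hll z hz
      | zero => rw [mul_zero, map_zero]; exact W.zero_mem
      | add x y hx hy ihx ihy =>
        rw [mul_add, map_add, LinearMap.add_apply]; exact W.add_mem ihx ihy
      | smul c x hx ihx =>
        rw [mul_smul_comm, map_smul, LinearMap.smul_apply]; exact W.smul_mem c ihx
    | zero => rw [lie_zero]; exact W.zero_mem
    | add x y hx hy ihx ihy => rw [lie_add]; exact W.add_mem ihx ihy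
    | smul c x hx ihx => rw [lie_smul]; exact W.smul_mem c ihx
  -- conclusion by induction over the adjoined algebra
  have main : ∀ u, u ∈ Algebra.adjoin F ((ι F) '' {X : gl F n | ∀ i j, i ≤ j → X i j = 0}) →
      ∀ w ∈ W, uA u w ∈ W := by
    intro u hu
    induction hu using Algebra.adjoin_induction with
    | mem x hx =>
      intro w hw
      obtain ⟨X, hX, rfl⟩ := hx
      rw [uA_ι]
      exact stage2 X hX w hw
    | algebraMap r =>
      intro w hw
      rw [AlgHom.commutes, Module.algebraMap_end_apply]
      exact W.smul_mem r hw
    | add x y hx hy ihx ihy =>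
      intro w hw
      rw [map_add, LinearMap.add_apply]
      exact W.add_mem (ihx w hw) (ihy w hw)
    | mul x y hx hy ihx ihy =>
      intro w hw
      rw [uA_mul]
      exact ihx _ (ihy w hw)
  intro u hu
  exact main u hu lam hlamW
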